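/- Let q be a positive integer. Let ξ₀, …, ξ_{q−1} : [0,1] → ℝ be twice continuously differentiable, let Q : [0,1] → (q×q complex matrices) be twice continuously differentiable with Q(x) unitary for every x ∈ [0,1], and let Φ : [0,1] → ℂ^q be twice continuously differentiable with Φ(0) = Φ(1) = 0. For N ∈ ℕ define Φ_N(x) = Q(x)·diag(exp(i·N·ξ_j(x)))_j·Q(x)⁻¹·Φ(x) and E(N) = −(1/(2q))·∫₀¹ ⟨Φ_N(x), Φ_N''(x)⟩ dx, where ⟨u, v⟩ = Σ_j conj(u_j)·v_j and '' denotes the second derivative in x. Set 𝔞 = (1/(2q))·∫₀¹ Σ_{j=0}^{q−1} (ξ_j'(x))²·|(Q(x)⁻¹·Φ(x))_j|² dx. Then 𝔞 ≥ 0 and there exists a constant C ≥ 0 such that |E(N) − 𝔞·N²| ≤ C·(N + 1) for all N ∈ ℕ. -/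

import Mathlib

open MeasureTheory intervalIntegral

noncomputable section QEGAux

namespace QEG

open Complex Finset

/-- unitarity sum rearrangement -/
lemma key_sum {q : ℕ} (Qm : Matrix (Fin q) (Fin q) ℂ)
    (hu : ∀ k' k : Fin q, ∑ j, (starRingEnd ℂ) (Qm j k') * Qm j k = if k' = k then 1 else 0)
    (ψ e : Fin q → ℂ) (he : ∀ k, (starRingEnd ℂ) (e k) * e k = 1) (r : Fin q → ℂ) :
    ∑ j, (starRingEnd ℂ) (∑ k, Qm j k * ψ k * e k) * (∑ k, r k * (Qm j k * ψ k) * e k)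
      = ∑ k, r k * ((starRingEnd ℂ) (ψ k) * ψ k) := by
  simp only [map_sum, map_mul, Finset.sum_mul, Finset.mul_sum]
  rw [Finset.sum_comm]
  refine Finset.sum_congr rfl fun k _ => ?_
  rw [Finset.sum_comm]
  calc ∑ k' : Fin q, ∑ j : Fin q,
        (starRingEnd ℂ) (Qm j k') * (starRingEnd ℂ) (ψ k') * (starRingEnd ℂ) (e k')
          * (r k * (Qm j k * ψ k) * e k)
      = ∑ k' : Fin q, (if k' = k then (1:ℂ) else 0) *
          ((starRingEnd ℂ) (ψ k') * (starRingEnd ℂ) (e k') * (r k * ψ k * e k)) := by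
        refine Finset.sum_congr rfl fun k' _ => ?_
        rw [← hu k' k, Finset.sum_mul]
        exact Finset.sum_congr rfl fun j _ => by ring
    _ = (starRingEnd ℂ) (ψ k) * (starRingEnd ℂ) (e k) * (r k * ψ k * e k) := by
        simp [ite_mul]
    _ = r k * ((starRingEnd ℂ) (ψ k) * ψ k) := by
        calc (starRingEnd ℂ) (ψ k) * (starRingEnd ℂ) (e k) * (r k * ψ k * e k)
            = r k * ((starRingEnd ℂ) (ψ k) * ψ k) * ((starRingEnd ℂ) (e k) * e k) := by ring
          _ = r k * ((starRingEnd ℂ) (ψ k) * ψ k) := by rw [he k, mul_one]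

/-- From `C²` extract differentiability data. -/
lemma cd2 {F : Type*} [NormedAddCommGroup F] [NormedSpace ℝ F] {f : ℝ → F}
    (hf : ContDiff ℝ 2 f) :
    Differentiable ℝ f ∧ Differentiable ℝ (deriv f) ∧ Continuous (deriv (deriv f)) := by
  rw [show (2 : WithTop ℕ∞) = 1 + 1 from one_add_one_eq_two.symm,
    contDiff_succ_iff_deriv] at hf
  obtain ⟨h1, -, h2⟩ := hf
  rw [show (1 : WithTop ℕ∞) = 0 + 1 from (zero_add 1).symm,
    contDiff_succ_iff_deriv] at h2
  obtain ⟨h3, -, h4⟩ := h2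
  exact ⟨h1, h3, h4.continuous⟩

variable {q : ℕ}

def Psi (Q : ℝ → Matrix (Fin q) (Fin q) ℂ) (Φ : ℝ → Fin q → ℂ) (x : ℝ) (k : Fin q) : ℂ :=
  ∑ l, (starRingEnd ℂ) (Q x l k) * Φ x l

def A0 (Q : ℝ → Matrix (Fin q) (Fin q) ℂ) (Φ : ℝ → Fin q → ℂ) (j k : Fin q) (x : ℝ) : ℂ :=
  Q x j k * Psi Q Φ x k

def eN (ξ : Fin q → ℝ → ℝ) (N : ℕ) (k : Fin q) (x : ℝ) : ℂ :=
  Complex.exp (Complex.I * (N : ℂ) * (ξ k x : ℂ))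

def G (ξ : Fin q → ℝ → ℝ) (Q : ℝ → Matrix (Fin q) (Fin q) ℂ) (Φ : ℝ → Fin q → ℂ)
    (N : ℕ) (x : ℝ) : Fin q → ℂ :=
  fun j => ∑ k, A0 Q Φ j k x * eN ξ N k x

def D1 (ξ : Fin q → ℝ → ℝ) (Q : ℝ → Matrix (Fin q) (Fin q) ℂ) (Φ : ℝ → Fin q → ℂ)
    (N : ℕ) (x : ℝ) : Fin q → ℂ :=
  fun j => ∑ k, (deriv (A0 Q Φ j k) x
      + Complex.I * (N : ℂ) * ((deriv (ξ k) x : ℝ) : ℂ) * A0 Q Φ j k x) * eN ξ N k x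

def D2 (ξ : Fin q → ℝ → ℝ) (Q : ℝ → Matrix (Fin q) (Fin q) ℂ) (Φ : ℝ → Fin q → ℂ)
    (N : ℕ) (x : ℝ) : Fin q → ℂ :=
  fun j => ∑ k, (deriv (deriv (A0 Q Φ j k)) x
      + Complex.I * (N : ℂ) * (((deriv (deriv (ξ k)) x : ℝ) : ℂ) * A0 Q Φ j k x
          + 2 * ((deriv (ξ k) x : ℝ) : ℂ) * deriv (A0 Q Φ j k) x)
      - (N : ℂ) ^ 2 * ((deriv (ξ k) x : ℝ) : ℂ) ^ 2 * A0 Q Φ j k x) * eN ξ N k x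

def RemTerm (ξ : Fin q → ℝ → ℝ) (Q : ℝ → Matrix (Fin q) (Fin q) ℂ) (Φ : ℝ → Fin q → ℂ)
    (N : ℕ) (j k : Fin q) (x : ℝ) : ℂ :=
  (deriv (deriv (A0 Q Φ j k)) x
      + Complex.I * (N : ℂ) * (((deriv (deriv (ξ k)) x : ℝ) : ℂ) * A0 Q Φ j k x
          + 2 * ((deriv (ξ k) x : ℝ) : ℂ) * deriv (A0 Q Φ j k) x)) * eN ξ N k x

def Rem (ξ : Fin q → ℝ → ℝ) (Q : ℝ → Matrix (Fin q) (Fin q) ℂ) (Φ : ℝ → Fin q → ℂ)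
    (N : ℕ) (x : ℝ) : ℂ :=
  ∑ j, (starRingEnd ℂ) (G ξ Q Φ N x j) * ∑ k, RemTerm ξ Q Φ N j k x

def Sfun (ξ : Fin q → ℝ → ℝ) (Q : ℝ → Matrix (Fin q) (Fin q) ℂ) (Φ : ℝ → Fin q → ℂ)
    (x : ℝ) : ℝ :=
  ∑ k, (deriv (ξ k) x) ^ 2 * ‖Psi Q Φ x k‖ ^ 2

lemma contDiff_Psi (hQ : ∀ i j : Fin q, ContDiff ℝ 2 fun x => Q x i j)
    (hΦ : ContDiff ℝ 2 Φ) (k : Fin q) :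
    ContDiff ℝ 2 (fun x => Psi Q Φ x k) := by
  unfold Psi
  exact ContDiff.sum fun l _ => ((Complex.conjCLE.contDiff.comp (hQ l k))).mul (contDiff_pi.mp hΦ l)

lemma contDiff_A0 (hQ : ∀ i j : Fin q, ContDiff ℝ 2 fun x => Q x i j)
    (hΦ : ContDiff ℝ 2 Φ) (j k : Fin q) :
    ContDiff ℝ 2 (A0 Q Φ j k) :=
  (hQ j k).mul (contDiff_Psi hQ hΦ k)

lemma hasDerivAt_mul_exp {a : ℝ → ℂ} {a' : ℂ} {ζ : ℝ → ℝ} {ζ' x : ℝ} (N : ℕ)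
    (ha : HasDerivAt a a' x) (hζ : HasDerivAt ζ ζ' x) :
    HasDerivAt (fun y => a y * Complex.exp (Complex.I * (N : ℂ) * (ζ y : ℂ)))
      ((a' + Complex.I * (N : ℂ) * (ζ' : ℂ) * a x)
        * Complex.exp (Complex.I * (N : ℂ) * (ζ x : ℂ))) x := by
  have h1 : HasDerivAt (fun y => Complex.I * (N : ℂ) * ((ζ y : ℝ) : ℂ))
      (Complex.I * (N : ℂ) * (ζ' : ℂ)) x := (hζ.ofReal_comp).const_mul _
  have he := h1.cexp
  have := ha.mul he
  convert this using 1
  · rfl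
  · rfl
  ring


lemma hasDerivAt_G {ξ : Fin q → ℝ → ℝ} {Q : ℝ → Matrix (Fin q) (Fin q) ℂ}
    {Φ : ℝ → Fin q → ℂ}
    (hξ : ∀ j, ContDiff ℝ 2 (ξ j)) (hQ : ∀ i j : Fin q, ContDiff ℝ 2 fun x => Q x i j)
    (hΦ : ContDiff ℝ 2 Φ) (N : ℕ) (x : ℝ) :
    HasDerivAt (G ξ Q Φ N) (D1 ξ Q Φ N x) x := by
  rw [hasDerivAt_pi]
  intro j
  have h : ∀ k : Fin q, HasDerivAt (fun y => A0 Q Φ j k y * eN ξ N k y)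
      ((deriv (A0 Q Φ j k) x
        + Complex.I * (N:ℂ) * ((deriv (ξ k) x : ℝ):ℂ) * A0 Q Φ j k x) * eN ξ N k x) x :=
    fun k => hasDerivAt_mul_exp N ((cd2 (contDiff_A0 hQ hΦ j k)).1.differentiableAt.hasDerivAt)
      ((cd2 (hξ k)).1.differentiableAt.hasDerivAt)
  simpa [G, D1, eN] using HasDerivAt.fun_sum (fun k (_ : k ∈ Finset.univ) => h k)

lemma hasDerivAt_D1 {ξ : Fin q → ℝ → ℝ} {Q : ℝ → Matrix (Fin q) (Fin q) ℂ}
    {Φ : ℝ → Fin q → ℂ}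
    (hξ : ∀ j, ContDiff ℝ 2 (ξ j)) (hQ : ∀ i j : Fin q, ContDiff ℝ 2 fun x => Q x i j)
    (hΦ : ContDiff ℝ 2 Φ) (N : ℕ) (x : ℝ) :
    HasDerivAt (D1 ξ Q Φ N) (D2 ξ Q Φ N x) x := by
  rw [hasDerivAt_pi]
  intro j
  have hsum : ∀ k : Fin q, HasDerivAt
      (fun y => (deriv (A0 Q Φ j k) y
          + Complex.I * (N:ℂ) * ((deriv (ξ k) y : ℝ):ℂ) * A0 Q Φ j k y) * eN ξ N k y)
      ((deriv (deriv (A0 Q Φ j k)) x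
        + Complex.I * (N:ℂ) * (((deriv (deriv (ξ k)) x : ℝ):ℂ) * A0 Q Φ j k x
            + 2 * ((deriv (ξ k) x : ℝ):ℂ) * deriv (A0 Q Φ j k) x)
        - (N:ℂ)^2 * ((deriv (ξ k) x : ℝ):ℂ)^2 * A0 Q Φ j k x) * eN ξ N k x) x := by
    intro k
    obtain ⟨hA0d, hA1d, -⟩ := cd2 (contDiff_A0 hQ hΦ j k)
    obtain ⟨hξd, hξ1d, -⟩ := cd2 (hξ k)
    have hb : HasDerivAt
        (fun y => deriv (A0 Q Φ j k) y
            + Complex.I * (N:ℂ) * ((deriv (ξ k) y : ℝ):ℂ) * A0 Q Φ j k y)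
        (deriv (deriv (A0 Q Φ j k)) x
          + (Complex.I * (N:ℂ) * ((deriv (deriv (ξ k)) x : ℝ):ℂ) * A0 Q Φ j k x
             + Complex.I * (N:ℂ) * ((deriv (ξ k) x : ℝ):ℂ) * deriv (A0 Q Φ j k) x)) x := by
      have h2 : HasDerivAt (fun y => Complex.I * (N:ℂ) * ((deriv (ξ k) y : ℝ):ℂ))
          (Complex.I * (N:ℂ) * ((deriv (deriv (ξ k)) x : ℝ):ℂ)) x :=
        ((hξ1d.differentiableAt.hasDerivAt).ofReal_comp).const_mul _
      exact (hA1d.differentiableAt.hasDerivAt).add (h2.mul (hA0d.differentiableAt.hasDerivAt))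
    have h := hasDerivAt_mul_exp N hb (hξd.differentiableAt.hasDerivAt)
    simp only [eN]
    convert h using 2
    · linear_combination
        (-((N:ℂ)^2 * ((deriv (ξ k) x : ℝ):ℂ)^2 * A0 Q Φ j k x)) * Complex.I_sq
  simpa [D1, D2, eN] using HasDerivAt.fun_sum (fun k (_ : k ∈ Finset.univ) => hsum k)

end QEG

end QEGAux

open QEG Complex Finset

/-- Quadratic energy growth theorem for the `(p,q)`-resonant quantum piecewise
linear Fermi–Ulam accelerator: with the Floquet eigendecomposition
`Q(x)·diag(exp(iNξⱼ(x)))·Q(x)⁻¹` applied to the wave `Φ`, the energy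
`E(N) = −(1/(2q))∫₀¹⟨Φ_N, Φ_N''⟩` satisfies `E(N) = 𝔞N² + O(N)` with
nonnegative leading coefficient `𝔞 = (1/(2q))∫₀¹ Σⱼ(ξⱼ')²|(Q⁻¹Φ)ⱼ|²`. -/
theorem quadratic_energy_growth
    (q : ℕ) (hq : 0 < q)
    (ξ : Fin q → ℝ → ℝ) (hξ : ∀ j, ContDiff ℝ 2 (ξ j))
    (Q : ℝ → Matrix (Fin q) (Fin q) ℂ)
    (hQsmooth : ∀ i j : Fin q, ContDiff ℝ 2 (fun x => Q x i j))
    (hQunit : ∀ x ∈ Set.Icc (0:ℝ) 1, Q x ∈ Matrix.unitaryGroup (Fin q) ℂ)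
    (Φ : ℝ → (Fin q → ℂ)) (hΦsmooth : ContDiff ℝ 2 Φ)
    (hΦ0 : Φ 0 = 0) (hΦ1 : Φ 1 = 0)
    (ΦN : ℕ → ℝ → (Fin q → ℂ))
    (hΦN : ∀ (N : ℕ) (x : ℝ), ΦN N x =
      (Q x * Matrix.diagonal (fun j => Complex.exp (Complex.I * (N : ℂ) * (ξ j x : ℂ)))
        * (Q x)⁻¹).mulVec (Φ x))
    (E : ℕ → ℂ)
    (hE : ∀ N : ℕ, E N = -(1 / (2 * (q : ℂ))) *
      ∫ x in (0:ℝ)..1, ∑ j, (starRingEnd ℂ) (ΦN N x j) * deriv (deriv (ΦN N)) x j)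
    (𝔞 : ℝ)
    (h𝔞 : 𝔞 = (1 / (2 * (q : ℝ))) *
      ∫ x in (0:ℝ)..1, ∑ j, (deriv (ξ j) x)^2 * ‖((Q x)⁻¹).mulVec (Φ x) j‖^2) :
    0 ≤ 𝔞 ∧ ∃ C : ℝ, 0 ≤ C ∧ ∀ N : ℕ,
      ‖E N - (𝔞 : ℂ) * (N : ℂ)^2‖ ≤ C * ((N : ℝ) + 1) := by
    classical
  -- differentiability data
  have hA0 := fun j k => cd2 (contDiff_A0 hQsmooth hΦsmooth j k)
  have hξ2 := fun k => cd2 (hξ k)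
  -- inverse = star on [0,1]
  have hQinv : ∀ x ∈ Set.Icc (0:ℝ) 1, (Q x)⁻¹ = star (Q x) := fun x hx =>
    Matrix.inv_eq_right_inv (Matrix.mem_unitaryGroup_iff.mp (hQunit x hx))
  have hPsiEq : ∀ x ∈ Set.Icc (0:ℝ) 1,
      ((Q x)⁻¹).mulVec (Φ x) = fun k => Psi Q Φ x k := by
    intro x hx
    funext k
    rw [hQinv x hx]
    show (star (Q x)).mulVec (Φ x) k = Psi Q Φ x k
    rw [Matrix.mulVec, dotProduct, Psi]
    refine Finset.sum_congr rfl fun l _ => ?_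
    rw [Matrix.star_apply, starRingEnd_apply]
  have hPhiG : ∀ (N : ℕ), ∀ x ∈ Set.Icc (0:ℝ) 1, ΦN N x = G ξ Q Φ N x := by
    intro N x hx
    rw [hΦN N x, ← Matrix.mulVec_mulVec, ← Matrix.mulVec_mulVec, hPsiEq x hx]
    funext j
    have hmv : ((Q x).mulVec ((Matrix.diagonal fun i =>
          Complex.exp (Complex.I * (N:ℂ) * ((ξ i x : ℝ):ℂ))).mulVec fun k => Psi Q Φ x k)) j
        = ∑ k, Q x j k * (Complex.exp (Complex.I * (N:ℂ) * ((ξ k x : ℝ):ℂ)) * Psi Q Φ x k) := by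
      rw [Matrix.mulVec, dotProduct]
      simp [Matrix.mulVec_diagonal]
    rw [hmv]
    simp only [G, A0, eN]
    exact Finset.sum_congr rfl fun k _ => by ring
  have hderivG : ∀ N, deriv (G ξ Q Φ N) = D1 ξ Q Φ N := fun N =>
    funext fun x => (hasDerivAt_G hξ hQsmooth hΦsmooth N x).deriv
  have hderivD1 : ∀ N, deriv (D1 ξ Q Φ N) = D2 ξ Q Φ N := fun N =>
    funext fun x => (hasDerivAt_D1 hξ hQsmooth hΦsmooth N x).deriv
  have hdd : ∀ (N : ℕ), ∀ x ∈ Set.Ioo (0:ℝ) 1,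
      deriv (deriv (ΦN N)) x = D2 ξ Q Φ N x := by
    intro N x hx
    have hev : ΦN N =ᶠ[nhds x] G ξ Q Φ N :=
      Filter.eventuallyEq_of_mem (isOpen_Ioo.mem_nhds hx)
        (fun y hy => hPhiG N y (Set.Ioo_subset_Icc_self hy))
    have h1 : deriv (ΦN N) =ᶠ[nhds x] deriv (G ξ Q Φ N) := hev.deriv
    rw [h1.deriv_eq, hderivG N, hderivD1 N]
  -- continuity
  have hPsiC : ∀ k, Continuous fun x => Psi Q Φ x k :=
    fun k => (contDiff_Psi hQsmooth hΦsmooth k).continuous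
  have hA0C : ∀ j k, Continuous (A0 Q Φ j k) :=
    fun j k => (contDiff_A0 hQsmooth hΦsmooth j k).continuous
  have hA1C : ∀ j k, Continuous (deriv (A0 Q Φ j k)) := fun j k => ((hA0 j k).2.1).continuous
  have hA2C : ∀ j k, Continuous (deriv (deriv (A0 Q Φ j k))) := fun j k => (hA0 j k).2.2
  have hx1C : ∀ k, Continuous (deriv (ξ k)) := fun k => ((hξ2 k).2.1).continuous
  have hx2C : ∀ k, Continuous (deriv (deriv (ξ k))) := fun k => (hξ2 k).2.2
  have heNC : ∀ (N : ℕ) k, Continuous (eN ξ N k) := fun N k =>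
    Complex.continuous_exp.comp (continuous_const.mul (Complex.continuous_ofReal.comp (hξ k).continuous))
  have hGC : ∀ (N : ℕ) j, Continuous fun x => G ξ Q Φ N x j := fun N j =>
    continuous_finset_sum _ fun k _ => (hA0C j k).mul (heNC N k)
  have hRemC : ∀ N : ℕ, Continuous (Rem ξ Q Φ N) := by
    intro N
    refine continuous_finset_sum _ fun j _ => Continuous.mul ?_ ?_
    · exact Complex.conjCLE.continuous.comp (hGC N j)
    · refine continuous_finset_sum _ fun k _ => Continuous.mul ?_ (heNC N k)
      exact (hA2C j k).add (continuous_const.mul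
        (((Complex.continuous_ofReal.comp (hx2C k)).mul (hA0C j k)).add
          ((continuous_const.mul (Complex.continuous_ofReal.comp (hx1C k))).mul (hA1C j k))))
  have hSC : Continuous (Sfun ξ Q Φ) := by
    refine continuous_finset_sum _ fun k _ => Continuous.mul ?_ ?_
    · exact (hx1C k).pow 2
    · exact ((hPsiC k).norm).pow 2
  -- 𝔞 in terms of Sfun
  have h𝔞S : 𝔞 = (1 / (2 * (q:ℝ))) * ∫ x in (0:ℝ)..1, Sfun ξ Q Φ x := by
    rw [h𝔞]
    congr 1
    apply intervalIntegral.integral_congr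
    intro x hx
    rw [Set.uIcc_of_le zero_le_one] at hx
    show (∑ j, deriv (ξ j) x ^ 2 * ‖(Q x)⁻¹.mulVec (Φ x) j‖ ^ 2) = Sfun ξ Q Φ x
    rw [hPsiEq x hx]
    rfl
  have h𝔞nonneg : 0 ≤ 𝔞 := by
    rw [h𝔞S]
    refine mul_nonneg (by positivity) ?_
    refine intervalIntegral.integral_nonneg zero_le_one fun u hu => ?_
    exact Finset.sum_nonneg fun k _ => by positivity
  -- a.e. x ≠ 1
  have hae : ∀ᵐ x : ℝ, x ≠ (1:ℝ) := by
    rw [MeasureTheory.ae_iff]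
    simp only [ne_eq, not_not, Set.setOf_eq_eq_singleton]
    exact measure_singleton 1
  -- the energy integral
  have hEint : ∀ N : ℕ,
      (∫ x in (0:ℝ)..1, ∑ j, (starRingEnd ℂ) (ΦN N x j) * deriv (deriv (ΦN N)) x j)
      = -((N:ℂ)^2 * ((∫ x in (0:ℝ)..1, Sfun ξ Q Φ x : ℝ) : ℂ))
        + ∫ x in (0:ℝ)..1, Rem ξ Q Φ N x := by
    intro N
    have step1 : (∫ x in (0:ℝ)..1, ∑ j, (starRingEnd ℂ) (ΦN N x j) * deriv (deriv (ΦN N)) x j)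
        = ∫ x in (0:ℝ)..1,
            (-((N:ℂ)^2 * ((Sfun ξ Q Φ x : ℝ) : ℂ)) + Rem ξ Q Φ N x) := by
      apply intervalIntegral.integral_congr_ae
      filter_upwards [hae] with x hx1 hx
      rw [Set.uIoc_of_le zero_le_one] at hx
      have hxo : x ∈ Set.Ioo (0:ℝ) 1 := ⟨hx.1, lt_of_le_of_ne hx.2 hx1⟩
      have hxc : x ∈ Set.Icc (0:ℝ) 1 := Set.Ioo_subset_Icc_self hxo
      have e1 : ∀ j, ΦN N x j = G ξ Q Φ N x j := fun j => congrFun (hPhiG N x hxc) j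
      have hu : ∀ k' k : Fin q,
          ∑ j, (starRingEnd ℂ) (Q x j k') * Q x j k = if k' = k then 1 else 0 := by
        intro k' k
        have h1 : star (Q x) * Q x = 1 := Matrix.mem_unitaryGroup_iff'.mp (hQunit x hxc)
        have h2 : (star (Q x) * Q x) k' k = (1 : Matrix (Fin q) (Fin q) ℂ) k' k := by rw [h1]
        rw [Matrix.mul_apply, Matrix.one_apply] at h2
        rw [← h2]
        refine Finset.sum_congr rfl fun j _ => ?_
        rw [Matrix.star_apply, starRingEnd_apply]
      have he1 : ∀ k : Fin q, (starRingEnd ℂ) (eN ξ N k x) * eN ξ N k x = 1 := by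
        intro k
        have hc : (starRingEnd ℂ) (Complex.I * (N:ℂ) * ((ξ k x : ℝ):ℂ))
            = -(Complex.I * (N:ℂ) * ((ξ k x : ℝ):ℂ)) := by
          simp [map_mul, Complex.conj_I, Complex.conj_ofReal]
        simp only [eN, ← Complex.exp_conj, hc, ← Complex.exp_add]
        simp
      have hk := key_sum (Q x) hu (fun k => Psi Q Φ x k) (fun k => eN ξ N k x) he1
        (fun k => (N:ℂ)^2 * ((deriv (ξ k) x : ℝ):ℂ)^2)
      have hD2split : ∀ j, D2 ξ Q Φ N x j
          = (∑ k, RemTerm ξ Q Φ N j k x)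
            - ∑ k, ((N:ℂ)^2 * ((deriv (ξ k) x : ℝ):ℂ)^2)
                * (Q x j k * Psi Q Φ x k) * eN ξ N k x := by
        intro j
        simp only [D2, RemTerm, A0, ← Finset.sum_sub_distrib]
        exact Finset.sum_congr rfl fun k _ => by ring
      have expand : ∑ j, (starRingEnd ℂ) (G ξ Q Φ N x j) * D2 ξ Q Φ N x j
          = Rem ξ Q Φ N x
            - ∑ j, (starRingEnd ℂ) (∑ k, Q x j k * Psi Q Φ x k * eN ξ N k x)
                * ∑ k, ((N:ℂ)^2 * ((deriv (ξ k) x : ℝ):ℂ)^2)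
                    * (Q x j k * Psi Q Φ x k) * eN ξ N k x := by
        simp only [Rem, ← Finset.sum_sub_distrib]
        refine Finset.sum_congr rfl fun j _ => ?_
        rw [hD2split j, mul_sub]
        congr 2
      have hk2 : (∑ j, (starRingEnd ℂ) (∑ k, Q x j k * Psi Q Φ x k * eN ξ N k x)
            * ∑ k, ((N:ℂ)^2 * ((deriv (ξ k) x : ℝ):ℂ)^2)
                * (Q x j k * Psi Q Φ x k) * eN ξ N k x)
          = (N:ℂ)^2 * ((Sfun ξ Q Φ x : ℝ) : ℂ) := by
        rw [hk]
        simp only [Sfun]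
        push_cast
        rw [Finset.mul_sum]
        refine Finset.sum_congr rfl fun k _ => ?_
        rw [mul_comm ((starRingEnd ℂ) (Psi Q Φ x k)) (Psi Q Φ x k), Complex.mul_conj']
        push_cast
        ring
      calc ∑ j, (starRingEnd ℂ) (ΦN N x j) * deriv (deriv (ΦN N)) x j
          = ∑ j, (starRingEnd ℂ) (G ξ Q Φ N x j) * D2 ξ Q Φ N x j := by
            refine Finset.sum_congr rfl fun j _ => ?_
            rw [e1 j, hdd N x hxo]
        _ = -((N:ℂ)^2 * ((Sfun ξ Q Φ x : ℝ) : ℂ)) + Rem ξ Q Φ N x := by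
            rw [expand, hk2]; ring
    have hint1 : IntervalIntegrable (fun x => -((N:ℂ)^2 * ((Sfun ξ Q Φ x : ℝ) : ℂ)))
        MeasureTheory.volume 0 1 :=
      ((continuous_const.mul (Complex.continuous_ofReal.comp hSC)).neg).intervalIntegrable 0 1
    rw [step1, intervalIntegral.integral_add hint1 ((hRemC N).intervalIntegrable 0 1)]
    congr 1
    rw [intervalIntegral.integral_neg, intervalIntegral.integral_const_mul,
      intervalIntegral.integral_ofReal]
  have hEeq : ∀ N : ℕ, E N - (𝔞:ℂ) * (N:ℂ)^2
      = -(1/(2*(q:ℂ))) * ∫ x in (0:ℝ)..1, Rem ξ Q Φ N x := by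
    intro N
    rw [hE N, hEint N, h𝔞S]
    push_cast
    ring
  -- bound functions
  have hUC : Continuous fun x => ∑ j, ∑ k : Fin q, ‖A0 Q Φ j k x‖ :=
    continuous_finset_sum _ fun j _ => continuous_finset_sum _ fun k _ => (hA0C j k).norm
  have hV0C : Continuous fun x => ∑ j, ∑ k : Fin q, ‖deriv (deriv (A0 Q Φ j k)) x‖ :=
    continuous_finset_sum _ fun j _ => continuous_finset_sum _ fun k _ => (hA2C j k).norm
  have hV1C : Continuous fun x => ∑ j, ∑ k : Fin q,
      (|deriv (deriv (ξ k)) x| * ‖A0 Q Φ j k x‖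
        + 2 * |deriv (ξ k) x| * ‖deriv (A0 Q Φ j k) x‖) := by
    refine continuous_finset_sum _ fun j _ => continuous_finset_sum _ fun k _ => Continuous.add ?_ ?_
    · exact ((hx2C k).abs).mul (hA0C j k).norm
    · exact (continuous_const.mul ((hx1C k).abs)).mul (hA1C j k).norm
  obtain ⟨CU, hCU⟩ := (isCompact_Icc : IsCompact (Set.Icc (0:ℝ) 1)).exists_bound_of_continuousOn hUC.continuousOn
  obtain ⟨C0, hC0⟩ := (isCompact_Icc : IsCompact (Set.Icc (0:ℝ) 1)).exists_bound_of_continuousOn hV0C.continuousOn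
  obtain ⟨C1, hC1⟩ := (isCompact_Icc : IsCompact (Set.Icc (0:ℝ) 1)).exists_bound_of_continuousOn hV1C.continuousOn
  have hCU0 : 0 ≤ CU := le_trans (norm_nonneg _) (hCU 0 (by norm_num))
  have hC00 : 0 ≤ C0 := le_trans (norm_nonneg _) (hC0 0 (by norm_num))
  have hC10 : 0 ≤ C1 := le_trans (norm_nonneg _) (hC1 0 (by norm_num))
  have hUb : ∀ x ∈ Set.Icc (0:ℝ) 1, (∑ j, ∑ k : Fin q, ‖A0 Q Φ j k x‖) ≤ CU :=
    fun x hx => le_trans (le_abs_self _) (hCU x hx)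
  have hV0b : ∀ x ∈ Set.Icc (0:ℝ) 1, (∑ j, ∑ k : Fin q, ‖deriv (deriv (A0 Q Φ j k)) x‖) ≤ C0 :=
    fun x hx => le_trans (le_abs_self _) (hC0 x hx)
  have hV1b : ∀ x ∈ Set.Icc (0:ℝ) 1, (∑ j, ∑ k : Fin q,
      (|deriv (deriv (ξ k)) x| * ‖A0 Q Φ j k x‖
        + 2 * |deriv (ξ k) x| * ‖deriv (A0 Q Φ j k) x‖)) ≤ C1 :=
    fun x hx => le_trans (le_abs_self _) (hC1 x hx)
  -- norm of eN
  have hnorm_eN : ∀ (N : ℕ) k x, ‖eN ξ N k x‖ = 1 := by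
    intro N k x
    simp only [eN, Complex.norm_exp]
    have : (Complex.I * (N:ℂ) * ((ξ k x : ℝ):ℂ)).re = 0 := by
      simp [Complex.mul_re, Complex.mul_im]
    rw [this, Real.exp_zero]
  -- pointwise bounds
  have hGb : ∀ (N : ℕ) x j, ‖G ξ Q Φ N x j‖ ≤ ∑ j, ∑ k : Fin q, ‖A0 Q Φ j k x‖ := by
    intro N x j
    simp only [G]
    calc ‖∑ k, A0 Q Φ j k x * eN ξ N k x‖ ≤ ∑ k, ‖A0 Q Φ j k x * eN ξ N k x‖ :=
          norm_sum_le _ _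
      _ = ∑ k, ‖A0 Q Φ j k x‖ := by
          refine Finset.sum_congr rfl fun k _ => ?_
          rw [norm_mul, hnorm_eN, mul_one]
      _ ≤ ∑ j, ∑ k : Fin q, ‖A0 Q Φ j k x‖ :=
          Finset.single_le_sum (f := fun j => ∑ k : Fin q, ‖A0 Q Φ j k x‖)
            (fun i _ => Finset.sum_nonneg fun k _ => norm_nonneg _) (Finset.mem_univ j)
  have hRTb : ∀ (N : ℕ) x j, ‖∑ k, RemTerm ξ Q Φ N j k x‖
      ≤ (∑ j, ∑ k : Fin q, ‖deriv (deriv (A0 Q Φ j k)) x‖)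
        + (N:ℝ) * (∑ j, ∑ k : Fin q,
            (|deriv (deriv (ξ k)) x| * ‖A0 Q Φ j k x‖
              + 2 * |deriv (ξ k) x| * ‖deriv (A0 Q Φ j k) x‖)) := by
    intro N x j
    calc ‖∑ k, RemTerm ξ Q Φ N j k x‖ ≤ ∑ k, ‖RemTerm ξ Q Φ N j k x‖ := norm_sum_le _ _
      _ ≤ ∑ k, (‖deriv (deriv (A0 Q Φ j k)) x‖
            + (N:ℝ) * (|deriv (deriv (ξ k)) x| * ‖A0 Q Φ j k x‖
                + 2 * |deriv (ξ k) x| * ‖deriv (A0 Q Φ j k) x‖)) := by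
          refine Finset.sum_le_sum fun k _ => ?_
          simp only [RemTerm]
          rw [norm_mul, hnorm_eN, mul_one]
          refine le_trans (norm_add_le _ _) (add_le_add le_rfl ?_)
          rw [norm_mul, norm_mul, Complex.norm_I, one_mul, Complex.norm_natCast]
          refine mul_le_mul_of_nonneg_left ?_ (Nat.cast_nonneg N)
          refine le_trans (norm_add_le _ _) (add_le_add ?_ ?_)
          · rw [norm_mul, Complex.norm_real, Real.norm_eq_abs]
          · rw [norm_mul, norm_mul, Complex.norm_real, Real.norm_eq_abs]
            norm_num
      _ = (∑ k : Fin q, ‖deriv (deriv (A0 Q Φ j k)) x‖)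
            + (N:ℝ) * ∑ k : Fin q, (|deriv (deriv (ξ k)) x| * ‖A0 Q Φ j k x‖
                + 2 * |deriv (ξ k) x| * ‖deriv (A0 Q Φ j k) x‖) := by
          rw [Finset.sum_add_distrib, Finset.mul_sum]
      _ ≤ _ := by
          refine add_le_add ?_ (mul_le_mul_of_nonneg_left ?_ (Nat.cast_nonneg N))
          · exact Finset.single_le_sum (f := fun j => ∑ k : Fin q, ‖deriv (deriv (A0 Q Φ j k)) x‖)
              (fun i _ => Finset.sum_nonneg fun k _ => norm_nonneg _) (Finset.mem_univ j)
          · exact Finset.single_le_sum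
              (f := fun j => ∑ k : Fin q, (|deriv (deriv (ξ k)) x| * ‖A0 Q Φ j k x‖
                + 2 * |deriv (ξ k) x| * ‖deriv (A0 Q Φ j k) x‖))
              (fun i _ => Finset.sum_nonneg fun k _ => by positivity) (Finset.mem_univ j)
  have hRemb : ∀ (N : ℕ), ∀ x ∈ Set.Icc (0:ℝ) 1,
      ‖Rem ξ Q Φ N x‖ ≤ (q:ℝ) * (CU * (C0 + (N:ℝ) * C1)) := by
    intro N x hx
    calc ‖Rem ξ Q Φ N x‖ ≤ ∑ j, ‖(starRingEnd ℂ) (G ξ Q Φ N x j) * ∑ k, RemTerm ξ Q Φ N j k x‖ :=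
          norm_sum_le _ _
      _ ≤ ∑ _j : Fin q, CU * (C0 + (N:ℝ) * C1) := by
          refine Finset.sum_le_sum fun j _ => ?_
          rw [norm_mul, RCLike.norm_conj]
          refine mul_le_mul (le_trans (hGb N x j) (hUb x hx))
            (le_trans (hRTb N x j) (add_le_add (hV0b x hx)
              (mul_le_mul_of_nonneg_left (hV1b x hx) (Nat.cast_nonneg N))))
            (norm_nonneg _) hCU0
      _ = (q:ℝ) * (CU * (C0 + (N:ℝ) * C1)) := by
          rw [Finset.sum_const, Finset.card_univ, Fintype.card_fin, nsmul_eq_mul]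
  -- conclusion
  refine ⟨h𝔞nonneg, (1/(2*(q:ℝ))) * ((q:ℝ) * (CU * C0) + (q:ℝ) * (CU * C1)), ?_, ?_⟩
  · positivity
  · intro N
    have hint : ‖∫ x in (0:ℝ)..1, Rem ξ Q Φ N x‖
        ≤ ((q:ℝ) * (CU * (C0 + (N:ℝ) * C1))) * |1 - 0| := by
      refine intervalIntegral.norm_integral_le_of_norm_le_const fun x hx => ?_
      rw [Set.uIoc_of_le zero_le_one] at hx
      exact hRemb N x ⟨le_of_lt hx.1, hx.2⟩
    rw [hEeq N]
    have habs : ‖(-(1/(2*(q:ℂ))) * ∫ x in (0:ℝ)..1, Rem ξ Q Φ N x)‖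
        = (1/(2*(q:ℝ))) * ‖∫ x in (0:ℝ)..1, Rem ξ Q Φ N x‖ := by
      rw [norm_mul, norm_neg]
      congr 1
      rw [norm_div]
      simp
    rw [habs]
    have hq' : (0:ℝ) < (q:ℝ) := by exact_mod_cast hq
    have h1 : (0:ℝ) ≤ 1/(2*(q:ℝ)) := by positivity
    calc (1/(2*(q:ℝ))) * ‖∫ x in (0:ℝ)..1, Rem ξ Q Φ N x‖
        ≤ (1/(2*(q:ℝ))) * (((q:ℝ) * (CU * (C0 + (N:ℝ) * C1))) * |1 - 0|) :=
          mul_le_mul_of_nonneg_left hint h1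
      _ ≤ (1/(2*(q:ℝ))) * ((q:ℝ) * (CU * C0) + (q:ℝ) * (CU * C1)) * ((N:ℝ) + 1) := by
          rw [show |(1:ℝ) - 0| = 1 by norm_num, mul_one]
          have hN : (0:ℝ) ≤ (N:ℝ) := Nat.cast_nonneg N
          rw [mul_assoc]
          refine mul_le_mul_of_nonneg_left ?_ h1
          nlinarith [mul_nonneg (mul_nonneg hq'.le hCU0) hC00,
            mul_nonneg (mul_nonneg hq'.le hCU0) hC10,
            mul_nonneg (mul_nonneg (mul_nonneg hq'.le hCU0) hC00) hN]
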